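/- (Theorem 3: minimax converse as the information threshold vanishes.) For η > 0, let C_η^T denote the class of all tree-structured models M on p nodes (p an odd integer > 1, finite alphabet) whose information threshold satisfies 0 < I^o_M ≤ η. Then for any finite sample size n < ∞ and any estimator Φ mapping n i.i.d. samples X^{1:n} to a tree in the set T of all trees on p nodes, inf over estimators Φ of lim_{η ↓ 0} sup_{M ∈ C_η^T} P( Φ(X^{1:n}_{T_M}) ≠ T_M ) ≥ 1/2, where X^{1:n}_{T_M} are n i.i.d. samples from model M and T_M is the tree structure of M. -/

import Mathlib

set_option linter.unusedSectionVars false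

open scoped Classical

noncomputable section

namespace TreePaper

/-- `f` is a probability mass function. -/
def IsProbDist {α : Type*} (f : α → ℝ) : Prop :=
  (∀ a, 0 ≤ f a) ∧ ∑' a, f a = 1

/-- Shannon entropy (base 2) of a pmf, with the convention `0 · log 0 = 0`. -/
def ent {α : Type*} (f : α → ℝ) : ℝ := -∑' a, f a * Real.logb 2 (f a)

variable {V : Type*} [Fintype V] [DecidableEq V] {A : Type*}

/-- Marginal pmf of the coordinate `i`. -/
def marg1 (P : (V → A) → ℝ) (i : V) : A → ℝ :=
  fun a => ∑' x : V → A, if x i = a then P x else 0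

/-- Joint pmf of the pair of coordinates `(i, j)`. -/
def marg2 (P : (V → A) → ℝ) (i j : V) : A × A → ℝ :=
  fun ab => ∑' x : V → A, if x i = ab.1 ∧ x j = ab.2 then P x else 0

theorem marg2_symm (P : (V → A) → ℝ) (i j : V) (a b : A) :
    marg2 P i j (a, b) = marg2 P j i (b, a) :=
  tsum_congr fun _ => if_congr and_comm rfl rfl

/-- Mutual information (in bits) between the coordinates `i` and `j`,
`I(X_i; X_j) = H(X_i) + H(X_j) − H(X_i, X_j)`. -/
def mi (P : (V → A) → ℝ) (i j : V) : ℝ :=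
  ent (marg1 P i) + ent (marg1 P j) - ent (marg2 P i j)

/-- The factor attached to an edge in the tree factorization of a Markov random field. -/
def edgeFactor (P : (V → A) → ℝ) (x : V → A) : Sym2 V → ℝ :=
  Sym2.lift ⟨fun i j => marg2 P i j (x i, x j) / (marg1 P i (x i) * marg1 P j (x j)),
    fun i j => by
      dsimp only
      rw [marg2_symm P i j (x i) (x j), mul_comm (marg1 P i (x i)) (marg1 P j (x j))]⟩

/-- The distribution `P` is Markov with respect to (i.e. factorizes according to)
the tree `T`:  `p(x) = ∏_i p(x_i) ∏_{(i,j) ∈ E} p(x_i, x_j) / (p(x_i) p(x_j))`. -/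
def IsMarkovTree (T : SimpleGraph V) (P : (V → A) → ℝ) : Prop :=
  ∀ x : V → A,
    P x = (∏ i, marg1 P i (x i)) *
      ∏ e : Sym2 V, if e ∈ T.edgeSet then edgeFactor P x e else 1

/-- The tuple `(s(w, w̄), u, ū)` lies in the feasibility set `EV²`:  `s(w, w̄)` is an
edge of `T` lying on the unique path of `T` from `u` to `ū`, and this path has
at least two edges. -/
def EVtuple (T : SimpleGraph V) (w wb u ub : V) : Prop :=
  T.Adj w wb ∧ ∃ p : T.Walk u ub, p.IsPath ∧ s(w, wb) ∈ p.edges ∧ 2 ≤ p.length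

/-- The information threshold determined by the tree `T` and the
pairwise "mutual information" weights `I`:
`(1/2) · min_{(e,u,ū) ∈ EV²} ( I(w, w̄) − I(u, ū) )`. -/
def thresh (T : SimpleGraph V) (I : V → V → ℝ) : ℝ :=
  (1 / 2) * sInf {x : ℝ | ∃ w wb u ub : V, EVtuple T w wb u ub ∧ x = I w wb - I u ub}

/-- Total weight of the graph `G` under the edge weights `I`. -/
def score (I : V → V → ℝ) (G : SimpleGraph V) : ℝ :=
  ∑ i, ∑ j, if G.Adj i j then I i j else 0

/-- `G` is a maximum-weight spanning tree for the weights `I`. -/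
def IsMaxSpanTree (I : V → V → ℝ) (G : SimpleGraph V) : Prop :=
  G.IsTree ∧ ∀ G' : SimpleGraph V, G'.IsTree → score I G' ≤ score I G

/-- Probability of the event `E` under `n` i.i.d. samples from the pmf `P`. -/
def probn (P : (V → A) → ℝ) (n : ℕ) (E : Set (Fin n → V → A)) : ℝ :=
  ∑' ω : E, ∏ k, P (ω.1 k)

/-- Empirical marginal pmf of the coordinate `i` computed from the data set `ω`. -/
def emp1 {n : ℕ} (ω : Fin n → V → A) (i : V) : A → ℝ :=
  fun a => (∑ k, if ω k i = a then (1 : ℝ) else 0) / n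

/-- Empirical pairwise joint pmf of the coordinates `(i, j)`. -/
def emp2 {n : ℕ} (ω : Fin n → V → A) (i j : V) : A × A → ℝ :=
  fun ab => (∑ k, if ω k i = ab.1 ∧ ω k j = ab.2 then (1 : ℝ) else 0) / n

/-- Plug-in estimate of the mutual information between coordinates `i` and `j`. -/
def empMI {n : ℕ} (ω : Fin n → V → A) (i j : V) : ℝ :=
  ent (emp1 ω i) + ent (emp1 ω j) - ent (emp2 ω i j)

/-- The Chow–Liu algorithm recovers the tree `T` exactly on the data set `ω`:
every maximum-weight spanning tree for the plug-in mutual information edge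
weights equals `T`. -/
def CLRecovers {n : ℕ} (T : SimpleGraph V) (ω : Fin n → V → A) : Prop :=
  ∀ G : SimpleGraph V, IsMaxSpanTree (fun i j => empMI ω i j) G → G = T

/-- Assumption 2: connectivity, strictly positive pairwise mutual informations,
and nondegeneracy (the tree structure is unique). -/
def Assumption2 (T : SimpleGraph V) (P : (V → A) → ℝ) : Prop :=
  T.Connected ∧ (∀ i j : V, i ≠ j → 0 < mi P i j) ∧
    ∀ T' : SimpleGraph V, T'.IsTree → IsMarkovTree T' P → T' = T

/-- A tree-structured model on `p` nodes over the finite alphabet `X`: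
a tree together with a distribution that is Markov with respect to it. -/
structure TreeModel (p : ℕ) (X : Type*) where
  tree : SimpleGraph (Fin p)
  isTree : tree.IsTree
  dist : (Fin p → X) → ℝ
  prob : IsProbDist dist
  markov : IsMarkovTree tree dist

/-- The class `C_η^𝒯` of all tree-structured models with positive,
`η`-bounded information threshold `0 < I^o_M ≤ η`. -/
def modelClass (p : ℕ) (X : Type*) (η : ℝ) : Set (TreeModel p X) :=
  {M | 0 < thresh M.tree (mi M.dist) ∧ thresh M.tree (mi M.dist) ≤ η}

/-- Worst-case probability that the tree estimator `Φ` (from `n` i.i.d. samples)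
fails to recover the structure, over all models in `C_η^𝒯`. -/
def errSup (p : ℕ) (X : Type*) (n : ℕ)
    (Φ : (Fin n → Fin p → X) → {G : SimpleGraph (Fin p) // G.IsTree}) (η : ℝ) : ℝ :=
  sSup {x : ℝ | ∃ M ∈ modelClass p X η,
    x = probn M.dist n {ω | (Φ ω).1 ≠ M.tree}}

/-- star graph -/
def starG {m : ℕ} (c : Fin m) : SimpleGraph (Fin m) where
  Adj i j := i ≠ j ∧ (i = c ∨ j = c)
  symm := by constructor; intro i j h; exact ⟨h.1.symm, h.2.symm⟩
  loopless := by constructor; intro i h; exact h.1 rfl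

variable {m : ℕ} {c : Fin m}

lemma starG_adj {i j : Fin m} : (starG c).Adj i j ↔ i ≠ j ∧ (i = c ∨ j = c) := Iff.rfl

open SimpleGraph in
/-- canonical form of long paths in a star -/
lemma star_long_path {u ub : Fin m} (w : (starG c).Walk u ub) (hw : w.IsPath)
    (hl : 2 ≤ w.length) :
    u ≠ c ∧ ub ≠ c ∧ u ≠ ub ∧ ∃ (h1 : (starG c).Adj u c) (h2 : (starG c).Adj c ub),
      w = Walk.cons h1 (Walk.cons h2 Walk.nil) := by
  cases w with
  | nil => simp at hl
  | @cons _ v _ h1 w' =>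
    cases w' with
    | nil => simp at hl
    | @cons _ v' _ h2 w'' =>
      have hnodup := hw.support_nodup
      simp only [Walk.support_cons, List.nodup_cons] at hnodup
      have huv' : u ≠ v' := by
        intro h
        apply hnodup.1
        rw [List.mem_cons]
        exact Or.inr (by rw [h]; exact w''.start_mem_support)
      have hvc : v = c := by
        by_contra hvc
        have huc : u = c := h1.2.resolve_right hvc
        have hv'c : v' = c := h2.2.resolve_left hvc
        exact huv' (huc.trans hv'c.symm)
      subst hvc
      cases w'' with
      | nil =>
        refine ⟨h1.1, Ne.symm h2.1, ?_, h1, h2, rfl⟩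
        simpa using huv'
      | @cons _ z _ h3 r =>
        exfalso
        have hv'v : v' ≠ v := Ne.symm h2.1
        have hzv : z = v := h3.2.resolve_left hv'v
        apply hnodup.2.1
        simp only [Walk.support_cons, List.mem_cons]
        exact Or.inr (hzv ▸ Walk.start_mem_support r)

open SimpleGraph in
lemma star_loop_path {u : Fin m} (w : (starG c).Walk u u) (hw : w.IsPath) : w = Walk.nil := by
  cases w with
  | nil => rfl
  | @cons _ v _ h1 w' =>
    exfalso
    rw [Walk.cons_isPath_iff] at hw
    exact hw.2 w'.end_mem_support

open SimpleGraph in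
lemma star_path_unique {u ub : Fin m} (p q : (starG c).Walk u ub)
    (hp : p.IsPath) (hq : q.IsPath) : p = q := by
  rcases Nat.lt_or_ge p.length 2 with hlp | hlp
  · rcases Nat.lt_or_ge q.length 2 with hlq | hlq
    · -- both short
      cases p with
      | nil => exact (star_loop_path q hq).symm
      | @cons _ v _ h1 p' =>
        cases p' with
        | nil =>
          -- p is a single edge, so Adj u ub
          cases q with
          | nil => exact absurd rfl h1.1
          | @cons _ v2 _ h2 q' =>
            cases q' with
            | nil => rfl
            | cons h3 q'' => simp [Walk.length_cons] at hlq
        | cons _ _ => simp [Walk.length_cons] at hlp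
    · -- q long, p short: contradiction using adjacency
      obtain ⟨huc, hubc, huub, _⟩ := star_long_path q hq hlq
      cases p with
      | nil => exact absurd rfl huub
      | @cons _ v _ h1 p' =>
        cases p' with
        | nil => exact absurd h1.2 (by simp [huc, hubc])
        | cons _ _ => simp [Walk.length_cons] at hlp
  · obtain ⟨huc, hubc, huub, hp1, hp2, hpe⟩ := star_long_path p hp hlp
    rcases Nat.lt_or_ge q.length 2 with hlq | hlq
    · cases q with
      | nil => exact absurd rfl huub
      | @cons _ v _ h1 q' =>
        cases q' with
        | nil => exact absurd h1.2 (by simp [huc, hubc])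
        | cons _ _ => simp [Walk.length_cons] at hlq
    · obtain ⟨_, _, _, hq1, hq2, hqe⟩ := star_long_path q hq hlq
      rw [hpe, hqe]

open SimpleGraph in
lemma star_isTree : (starG c).IsTree := by
  rw [SimpleGraph.isTree_iff_existsUnique_path]
  constructor
  · exact ⟨c⟩
  · intro u v
    suffices h : ∃ w : (starG c).Walk u v, w.IsPath by
      obtain ⟨w, hw⟩ := h
      exact ⟨w, hw, fun q hq => star_path_unique q w hq hw⟩
    by_cases huv : u = v
    · subst huv; exact ⟨Walk.nil, by simp⟩
    · by_cases huc : u = c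
      · exact ⟨Walk.cons (starG_adj.2 ⟨huv, Or.inl huc⟩) Walk.nil, by simp [huv]⟩
      · by_cases hvc : v = c
        · exact ⟨Walk.cons (starG_adj.2 ⟨huv, Or.inr hvc⟩) Walk.nil, by simp [huv]⟩
        · refine ⟨Walk.cons (starG_adj.2 ⟨huc, Or.inr rfl⟩) (Walk.cons (starG_adj.2 ⟨Ne.symm hvc, Or.inl rfl⟩) Walk.nil), ?_⟩
          simp [Walk.isPath_def, Walk.support_cons, List.nodup_cons]
          exact ⟨⟨huc, huv⟩, fun h => hvc h.symm⟩

lemma star_edgeFilter :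
    Finset.univ.filter (· ∈ (starG c).edgeSet)
      = (Finset.univ.erase c).image (fun j => s(c, j)) := by
  ext e
  induction e with
  | _ i j =>
    simp only [Finset.mem_filter, Finset.mem_univ, true_and, SimpleGraph.mem_edgeSet,
      Finset.mem_image, Finset.mem_erase, starG_adj, Sym2.eq_iff]
    aesop

lemma star_edge_prod (f : Sym2 (Fin m) → ℝ) :
    (∏ e : Sym2 (Fin m), if e ∈ (starG c).edgeSet then f e else 1)
      = ∏ j ∈ Finset.univ.erase c, f s(c, j) := by
  rw [← Finset.prod_filter, star_edgeFilter, Finset.prod_image]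
  intro a ha b hb hab
  have ha' : a ≠ c := (Finset.mem_erase.1 ha).1
  rw [Sym2.eq_iff] at hab
  rcases hab with ⟨-, h⟩ | ⟨h1, h2⟩
  · exact h
  · exact absurd h2 ha'

section Dist
variable {X : Type*} [Fintype X]

/-- indicator of the two-element support -/
def indp (a0 a1 : X) (a : X) : ℝ := if a = a0 ∨ a = a1 then 1 else 0

/-- symmetric channel factor -/
def qd (δ : ℝ) (y z : X) : ℝ := if y = z then 1 - δ else δ

/-- the star-structured distribution -/
def Pstar (a0 a1 : X) (c : Fin m) (δ : ℝ) (x : Fin m → X) : ℝ :=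
  2⁻¹ * ∏ i, (if i = c then indp a0 a1 (x i) else indp a0 a1 (x i) * qd δ (x i) (x c))

lemma Pstar_eq (a0 a1 : X) (c : Fin m) (δ : ℝ) (x : Fin m → X) :
    Pstar a0 a1 c δ x
      = (2⁻¹ * indp a0 a1 (x c)) *
          ∏ i ∈ Finset.univ.erase c, (indp a0 a1 (x i) * qd δ (x i) (x c)) := by
  rw [Pstar, ← Finset.mul_prod_erase (a := c) _ _ (Finset.mem_univ c), if_pos rfl, mul_assoc]
  congr 1
  congr 1
  apply Finset.prod_congr rfl
  intro i hi
  rw [if_neg (Finset.mem_erase.1 hi).1]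

/-- master factorization of sums over configurations of the star model -/
lemma masterSum (c : Fin m) (G : X → ℝ) (F : Fin m → X → X → ℝ) :
    ∑ x : Fin m → X, (G (x c) * ∏ i ∈ Finset.univ.erase c, F i (x i) (x c))
      = ∑ a : X, G a * ∏ i ∈ Finset.univ.erase c, ∑ y : X, F i y a := by
  classical
  have h1 : ∀ (x : Fin m → X) (a : X),
      (∏ i : Fin m, (if i = c then (if x i = a then G (x i) else 0) else F i (x i) a))
        = if x c = a then G a * ∏ i ∈ Finset.univ.erase c, F i (x i) a else 0 := by
    intro x a
    rw [← Finset.mul_prod_erase (a := c) _ _ (Finset.mem_univ c), if_pos rfl]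
    rw [Finset.prod_congr rfl (fun i hi => if_neg (Finset.mem_erase.1 hi).1)]
    by_cases h : x c = a
    · rw [if_pos h, if_pos h, h]
    · rw [if_neg h, if_neg h, zero_mul]
  calc ∑ x : Fin m → X, (G (x c) * ∏ i ∈ Finset.univ.erase c, F i (x i) (x c))
      = ∑ x : Fin m → X, ∑ a : X,
          ∏ i : Fin m, (if i = c then (if x i = a then G (x i) else 0) else F i (x i) a) := by
        refine Finset.sum_congr rfl fun x _ => ?_
        rw [Finset.sum_congr rfl fun a _ => h1 x a,
          Finset.sum_ite_eq Finset.univ (x c)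
            (fun a => G a * ∏ i ∈ Finset.univ.erase c, F i (x i) a),
          if_pos (Finset.mem_univ _)]
    _ = ∑ a : X, ∑ x : Fin m → X,
          ∏ i : Fin m, (if i = c then (if x i = a then G (x i) else 0) else F i (x i) a) :=
        Finset.sum_comm
    _ = ∑ a : X, ∏ i : Fin m, ∑ y : X, (if i = c then (if y = a then G y else 0) else F i y a) := by
        refine Finset.sum_congr rfl fun a _ => ?_
        rw [← Finset.sum_prod_piFinset Finset.univ
          (fun i y => if i = c then (if y = a then G y else 0) else F i y a)]
        rw [Fintype.piFinset_univ]
    _ = ∑ a : X, G a * ∏ i ∈ Finset.univ.erase c, ∑ y : X, F i y a := by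
        refine Finset.sum_congr rfl fun a _ => ?_
        rw [← Finset.mul_prod_erase (a := c) _ _ (Finset.mem_univ c)]
        congr 1
        · rw [Finset.sum_congr rfl fun y _ => if_pos rfl,
            Finset.sum_ite_eq' Finset.univ a G, if_pos (Finset.mem_univ _)]
        · exact Finset.prod_congr rfl fun i hi =>
            Finset.sum_congr rfl fun y _ => if_neg (Finset.mem_erase.1 hi).1

variable {a0 a1 : X}

lemma indp_pos {a : X} (ha : a = a0 ∨ a = a1) : indp a0 a1 a = 1 := if_pos ha
lemma indp_neg {a : X} (ha : ¬(a = a0 ∨ a = a1)) : indp a0 a1 a = 0 := if_neg ha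
lemma indp_nonneg (a : X) : 0 ≤ indp a0 a1 a := by unfold indp; split_ifs <;> norm_num

lemma sum_indp_mul (h01 : a0 ≠ a1) (t : X → ℝ) :
    ∑ a : X, indp a0 a1 a * t a = t a0 + t a1 := by
  classical
  have : ∀ a : X, indp a0 a1 a * t a = if a = a0 ∨ a = a1 then t a else 0 := by
    intro a; unfold indp; split_ifs <;> simp
  rw [Finset.sum_congr rfl fun a _ => this a, ← Finset.sum_filter]
  have hf : Finset.univ.filter (fun a : X => a = a0 ∨ a = a1) = {a0, a1} := by
    ext a; simp [Finset.mem_filter, Finset.mem_insert]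
  rw [hf, Finset.sum_pair h01]

lemma qd_sum_left (h01 : a0 ≠ a1) {δ : ℝ} {a : X} (ha : a = a0 ∨ a = a1) :
    qd δ a0 a + qd δ a1 a = 1 := by
  rcases ha with rfl | rfl
  · rw [qd, qd, if_pos rfl, if_neg h01.symm]; ring
  · rw [qd, qd, if_neg h01, if_pos rfl]; ring

lemma qd_sum_right (h01 : a0 ≠ a1) {δ : ℝ} {a : X} (ha : a = a0 ∨ a = a1) :
    qd δ a a0 + qd δ a a1 = 1 := by
  rcases ha with rfl | rfl
  · rw [qd, qd, if_pos rfl, if_neg h01]; ring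
  · rw [qd, qd, if_neg h01.symm, if_pos rfl]; ring

lemma sum_indp_qd (h01 : a0 ≠ a1) (δ : ℝ) (z : X) :
    ∑ y : X, indp a0 a1 y * qd δ y z = qd δ a0 z + qd δ a1 z :=
  sum_indp_mul h01 _

/-- total mass of `Pstar` is one, for every `δ`. -/
lemma Pstar_total (h01 : a0 ≠ a1) (c : Fin m) (δ : ℝ) :
    ∑ x : Fin m → X, Pstar a0 a1 c δ x = 1 := by
  rw [Finset.sum_congr rfl fun x _ => Pstar_eq a0 a1 c δ x,
    masterSum c (fun z => 2⁻¹ * indp a0 a1 z) (fun _ y z => indp a0 a1 y * qd δ y z)]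
  have : ∀ a : X, (2⁻¹ * indp a0 a1 a) * ∏ i ∈ Finset.univ.erase c,
      ∑ y : X, indp a0 a1 y * qd δ y a
      = indp a0 a1 a * (2⁻¹ * ∏ i ∈ Finset.univ.erase c, (qd δ a0 a + qd δ a1 a)) := by
    intro a
    rw [Finset.prod_congr rfl fun i _ => sum_indp_qd h01 δ a]; ring
  rw [Finset.sum_congr rfl fun a _ => this a, sum_indp_mul h01]
  rw [Finset.prod_congr rfl fun i _ => qd_sum_left h01 (Or.inl rfl),
    Finset.prod_congr rfl fun i _ => qd_sum_left h01 (Or.inr rfl)]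
  norm_num

lemma marg1_Pstar (h01 : a0 ≠ a1) (c i : Fin m) (δ : ℝ) :
    marg1 (Pstar a0 a1 c δ) i = fun a => 2⁻¹ * indp a0 a1 a := by
  classical
  funext a
  rw [marg1, tsum_fintype]
  by_cases hic : i = c
  · subst hic
    have hsummand : ∀ x : Fin m → X,
        (if x i = a then Pstar a0 a1 i δ x else 0)
          = (if x i = a then 2⁻¹ * indp a0 a1 (x i) else 0) *
              ∏ j ∈ Finset.univ.erase i, (indp a0 a1 (x j) * qd δ (x j) (x i)) := by
      intro x
      by_cases h : x i = a
      · rw [if_pos h, if_pos h, Pstar_eq]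
      · rw [if_neg h, if_neg h, zero_mul]
    rw [Finset.sum_congr rfl fun x _ => hsummand x,
      masterSum i (fun z => if z = a then 2⁻¹ * indp a0 a1 z else 0)
        (fun _ y z => indp a0 a1 y * qd δ y z)]
    have hpt : ∀ z : X,
        (if z = a then 2⁻¹ * indp a0 a1 z else 0) *
            (∏ j ∈ Finset.univ.erase i, ∑ y : X, indp a0 a1 y * qd δ y z)
          = if z = a then (2⁻¹ * indp a0 a1 z *
              ∏ j ∈ Finset.univ.erase i, ∑ y : X, indp a0 a1 y * qd δ y z) else 0 := by
      intro z; split_ifs <;> simp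
    rw [Finset.sum_congr rfl fun z _ => hpt z, Finset.sum_ite_eq' Finset.univ a,
      if_pos (Finset.mem_univ _)]
    by_cases ha : a = a0 ∨ a = a1
    · rw [Finset.prod_congr rfl fun j _ => (sum_indp_qd h01 δ a).trans (qd_sum_left h01 ha),
        Finset.prod_const_one, mul_one]
    · rw [indp_neg ha]; ring
  · have hii : i ∈ Finset.univ.erase c := Finset.mem_erase.2 ⟨hic, Finset.mem_univ _⟩
    set F : Fin m → X → X → ℝ := fun j y z =>
      if j = i then (if y = a then indp a0 a1 y * qd δ y z else 0)
      else indp a0 a1 y * qd δ y z with hF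
    have hsummand : ∀ x : Fin m → X,
        (if x i = a then Pstar a0 a1 c δ x else 0)
          = (2⁻¹ * indp a0 a1 (x c)) * ∏ j ∈ Finset.univ.erase c, F j (x j) (x c) := by
      intro x
      by_cases h : x i = a
      · rw [if_pos h, Pstar_eq]
        congr 1
        refine Finset.prod_congr rfl fun j _ => ?_
        by_cases hji : j = i
        · subst hji; simp [hF, h]
        · simp [hF, hji]
      · rw [if_neg h]
        symm
        apply mul_eq_zero_of_right
        apply Finset.prod_eq_zero hii
        simp [hF, h]
    rw [Finset.sum_congr rfl fun x _ => hsummand x, masterSum c (fun z => 2⁻¹ * indp a0 a1 z) F]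
    have hprod : ∀ z : X, (z = a0 ∨ z = a1) →
        (∏ j ∈ Finset.univ.erase c, ∑ y : X, F j y z) = indp a0 a1 a * qd δ a z := by
      intro z hz
      rw [← Finset.mul_prod_erase _ _ hii]
      have h1 : (∑ y : X, F i y z) = indp a0 a1 a * qd δ a z := by
        have hy : ∀ y : X, F i y z = if y = a then indp a0 a1 y * qd δ y z else 0 := by
          intro y; simp [hF]
        rw [Finset.sum_congr rfl fun y _ => hy y,
          Finset.sum_ite_eq' Finset.univ a, if_pos (Finset.mem_univ _)]
      have h2 : ∀ j ∈ (Finset.univ.erase c).erase i, (∑ y : X, F j y z) = 1 := by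
        intro j hj
        have hy : ∀ y : X, F j y z = indp a0 a1 y * qd δ y z := by
          intro y; simp only [hF]; rw [if_neg (Finset.mem_erase.1 hj).1]
        rw [Finset.sum_congr rfl fun y _ => hy y]
        exact (sum_indp_qd h01 δ z).trans (qd_sum_left h01 hz)
      rw [h1, Finset.prod_congr rfl h2, Finset.prod_const_one, mul_one]
    have hpt : ∀ z : X,
        (2⁻¹ * indp a0 a1 z) * ∏ j ∈ Finset.univ.erase c, ∑ y : X, F j y z
          = indp a0 a1 z * (2⁻¹ * ∏ j ∈ Finset.univ.erase c, ∑ y : X, F j y z) := by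
      intro z; ring
    rw [Finset.sum_congr rfl fun z _ => hpt z, sum_indp_mul h01,
      hprod a0 (Or.inl rfl), hprod a1 (Or.inr rfl)]
    by_cases ha : a = a0 ∨ a = a1
    · have := qd_sum_right h01 (δ := δ) ha
      linear_combination (2⁻¹ * indp a0 a1 a) * this
    · rw [indp_neg ha]; ring

lemma qd_symm (δ : ℝ) (y z : X) : qd δ y z = qd δ z y := by
  unfold qd; exact if_congr eq_comm rfl rfl

/-- the common two-coordinate marginal shape -/
def pairDist (a0 a1 : X) (γ : ℝ) : X × X → ℝ :=
  fun ab => 2⁻¹ * indp a0 a1 ab.1 * indp a0 a1 ab.2 * qd γ ab.1 ab.2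

lemma pairDist_swap (γ : ℝ) (a b : X) :
    pairDist a0 a1 γ (b, a) = pairDist a0 a1 γ (a, b) := by
  unfold pairDist; rw [qd_symm]; ring

lemma marg2_center (h01 : a0 ≠ a1) (c j : Fin m) (hj : j ≠ c) (δ : ℝ) :
    marg2 (Pstar a0 a1 c δ) c j = pairDist a0 a1 δ := by
  classical
  funext ab
  obtain ⟨a, b⟩ := ab
  rw [marg2, tsum_fintype]
  have hjj : j ∈ Finset.univ.erase c := Finset.mem_erase.2 ⟨hj, Finset.mem_univ _⟩
  set F : Fin m → X → X → ℝ := fun l y z =>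
    if l = j then (if y = b then indp a0 a1 y * qd δ y z else 0)
    else indp a0 a1 y * qd δ y z with hF
  have hsummand : ∀ x : Fin m → X,
      (if x c = a ∧ x j = b then Pstar a0 a1 c δ x else 0)
        = (if x c = a then 2⁻¹ * indp a0 a1 (x c) else 0) *
            ∏ l ∈ Finset.univ.erase c, F l (x l) (x c) := by
    intro x
    by_cases h1 : x c = a
    · by_cases h2 : x j = b
      · rw [if_pos ⟨h1, h2⟩, if_pos h1, Pstar_eq]
        congr 1
        refine Finset.prod_congr rfl fun l _ => ?_
        by_cases hlj : l = j
        · subst hlj; simp [hF, h2]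
        · simp [hF, hlj]
      · rw [if_neg (fun h => h2 h.2)]
        symm
        apply mul_eq_zero_of_right
        apply Finset.prod_eq_zero hjj
        simp [hF, h2]
    · rw [if_neg (fun h => h1 h.1), if_neg h1, zero_mul]
  rw [Finset.sum_congr rfl fun x _ => hsummand x,
    masterSum c (fun z => if z = a then 2⁻¹ * indp a0 a1 z else 0) F]
  have hpt : ∀ z : X,
      (if z = a then 2⁻¹ * indp a0 a1 z else 0) *
          (∏ l ∈ Finset.univ.erase c, ∑ y : X, F l y z)
        = if z = a then (2⁻¹ * indp a0 a1 z *
            ∏ l ∈ Finset.univ.erase c, ∑ y : X, F l y z) else 0 := by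
    intro z; split_ifs <;> simp
  rw [Finset.sum_congr rfl fun z _ => hpt z, Finset.sum_ite_eq' Finset.univ a,
    if_pos (Finset.mem_univ _)]
  by_cases ha : a = a0 ∨ a = a1
  · have hprod : (∏ l ∈ Finset.univ.erase c, ∑ y : X, F l y a)
        = indp a0 a1 b * qd δ b a := by
      rw [← Finset.mul_prod_erase _ _ hjj]
      have h1 : (∑ y : X, F j y a) = indp a0 a1 b * qd δ b a := by
        have hy : ∀ y : X, F j y a = if y = b then indp a0 a1 y * qd δ y a else 0 := by
          intro y; simp [hF]
        rw [Finset.sum_congr rfl fun y _ => hy y,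
          Finset.sum_ite_eq' Finset.univ b, if_pos (Finset.mem_univ _)]
      have h2 : ∀ l ∈ (Finset.univ.erase c).erase j, (∑ y : X, F l y a) = 1 := by
        intro l hl
        have hy : ∀ y : X, F l y a = indp a0 a1 y * qd δ y a := by
          intro y; simp only [hF]; rw [if_neg (Finset.mem_erase.1 hl).1]
        rw [Finset.sum_congr rfl fun y _ => hy y]
        exact (sum_indp_qd h01 δ a).trans (qd_sum_left h01 ha)
      rw [h1, Finset.prod_congr rfl h2, Finset.prod_const_one, mul_one]
    rw [hprod, pairDist]
    rw [qd_symm]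
    ring
  · rw [indp_neg ha, pairDist, indp_neg ha]; ring

lemma marg2_center' (h01 : a0 ≠ a1) (c j : Fin m) (hj : j ≠ c) (δ : ℝ) :
    marg2 (Pstar a0 a1 c δ) j c = pairDist a0 a1 δ := by
  funext ab
  obtain ⟨a, b⟩ := ab
  rw [marg2_symm, marg2_center h01 c j hj δ, pairDist_swap]

lemma qd_same (δ : ℝ) (y : X) : qd δ y y = 1 - δ := by unfold qd; exact if_pos rfl
lemma qd_ne {δ : ℝ} {y z : X} (h : y ≠ z) : qd δ y z = δ := by unfold qd; exact if_neg h

lemma qd_combine (h01 : a0 ≠ a1) (δ : ℝ) (a b : X) :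
    indp a0 a1 a * indp a0 a1 b *
        (qd δ a a0 * qd δ b a0 + qd δ a a1 * qd δ b a1)
      = indp a0 a1 a * indp a0 a1 b * qd (2 * δ * (1 - δ)) a b := by
  by_cases ha : a = a0 ∨ a = a1
  · by_cases hb : b = a0 ∨ b = a1
    · rcases ha with rfl | rfl <;> rcases hb with rfl | rfl <;>
        simp only [qd_same, qd_ne h01, qd_ne h01.symm] <;> ring
    · rw [indp_neg hb]; ring
  · rw [indp_neg ha]; ring

lemma marg2_leaves (h01 : a0 ≠ a1) (c j k : Fin m) (hj : j ≠ c) (hk : k ≠ c)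
    (hjk : j ≠ k) (δ : ℝ) :
    marg2 (Pstar a0 a1 c δ) j k = pairDist a0 a1 (2 * δ * (1 - δ)) := by
  classical
  funext ab
  obtain ⟨a, b⟩ := ab
  rw [marg2, tsum_fintype]
  have hjj : j ∈ Finset.univ.erase c := Finset.mem_erase.2 ⟨hj, Finset.mem_univ _⟩
  have hkk : k ∈ (Finset.univ.erase c).erase j :=
    Finset.mem_erase.2 ⟨fun h => hjk h.symm, Finset.mem_erase.2 ⟨hk, Finset.mem_univ _⟩⟩
  have hkk' : k ∈ Finset.univ.erase c := Finset.mem_erase.2 ⟨hk, Finset.mem_univ _⟩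
  have hkj : k ≠ j := fun h => hjk h.symm
  set F : Fin m → X → X → ℝ := fun l y z =>
    if l = j then (if y = a then indp a0 a1 y * qd δ y z else 0)
    else if l = k then (if y = b then indp a0 a1 y * qd δ y z else 0)
    else indp a0 a1 y * qd δ y z with hF
  have hsummand : ∀ x : Fin m → X,
      (if x j = a ∧ x k = b then Pstar a0 a1 c δ x else 0)
        = (2⁻¹ * indp a0 a1 (x c)) * ∏ l ∈ Finset.univ.erase c, F l (x l) (x c) := by
    intro x
    by_cases h1 : x j = a
    · by_cases h2 : x k = b
      · rw [if_pos ⟨h1, h2⟩, Pstar_eq]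
        congr 1
        refine Finset.prod_congr rfl fun l _ => ?_
        by_cases hlj : l = j
        · subst hlj; simp [hF, h1]
        · by_cases hlk : l = k
          · subst hlk; simp [hF, h2, hlj]
          · simp [hF, hlj, hlk]
      · rw [if_neg (fun h => h2 h.2)]
        symm
        apply mul_eq_zero_of_right
        apply Finset.prod_eq_zero hkk'
        simp [hF, h2, hkj]
    · rw [if_neg (fun h => h1 h.1)]
      symm
      apply mul_eq_zero_of_right
      apply Finset.prod_eq_zero hjj
      simp [hF, h1]
  rw [Finset.sum_congr rfl fun x _ => hsummand x,
    masterSum c (fun z => 2⁻¹ * indp a0 a1 z) F]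
  have hprod : ∀ z : X, (z = a0 ∨ z = a1) →
      (∏ l ∈ Finset.univ.erase c, ∑ y : X, F l y z)
        = (indp a0 a1 a * qd δ a z) * (indp a0 a1 b * qd δ b z) := by
    intro z hz
    rw [← Finset.mul_prod_erase _ _ hjj, ← Finset.mul_prod_erase _ _ hkk]
    have h1 : (∑ y : X, F j y z) = indp a0 a1 a * qd δ a z := by
      have hy : ∀ y : X, F j y z = if y = a then indp a0 a1 y * qd δ y z else 0 := by
        intro y; simp [hF]
      rw [Finset.sum_congr rfl fun y _ => hy y,
        Finset.sum_ite_eq' Finset.univ a, if_pos (Finset.mem_univ _)]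
    have h1k : (∑ y : X, F k y z) = indp a0 a1 b * qd δ b z := by
      have hy : ∀ y : X, F k y z = if y = b then indp a0 a1 y * qd δ y z else 0 := by
        intro y; simp [hF, hkj]
      rw [Finset.sum_congr rfl fun y _ => hy y,
        Finset.sum_ite_eq' Finset.univ b, if_pos (Finset.mem_univ _)]
    have h2 : ∀ l ∈ ((Finset.univ.erase c).erase j).erase k, (∑ y : X, F l y z) = 1 := by
      intro l hl
      have hlk := (Finset.mem_erase.1 hl).1
      have hlj := (Finset.mem_erase.1 (Finset.mem_erase.1 hl).2).1
      have hy : ∀ y : X, F l y z = indp a0 a1 y * qd δ y z := by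
        intro y; simp only [hF]; rw [if_neg hlj, if_neg hlk]
      rw [Finset.sum_congr rfl fun y _ => hy y]
      exact (sum_indp_qd h01 δ z).trans (qd_sum_left h01 hz)
    rw [h1, h1k, Finset.prod_congr rfl h2, Finset.prod_const_one, mul_one, mul_assoc]
  have hpt : ∀ z : X,
      (2⁻¹ * indp a0 a1 z) * ∏ l ∈ Finset.univ.erase c, ∑ y : X, F l y z
        = indp a0 a1 z * (2⁻¹ * ∏ l ∈ Finset.univ.erase c, ∑ y : X, F l y z) := by
    intro z; ring
  rw [Finset.sum_congr rfl fun z _ => hpt z, sum_indp_mul h01,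
    hprod a0 (Or.inl rfl), hprod a1 (Or.inr rfl), pairDist]
  have := qd_combine h01 δ a b
  dsimp only
  linear_combination 2⁻¹ * this

lemma qd_nonneg {δ : ℝ} (hδ0 : 0 ≤ δ) (hδ1 : δ ≤ 1) (y z : X) : 0 ≤ qd δ y z := by
  unfold qd; split_ifs <;> linarith

lemma Pstar_nonneg {δ : ℝ} (hδ0 : 0 ≤ δ) (hδ1 : δ ≤ 1) (c : Fin m) (x : Fin m → X) :
    0 ≤ Pstar a0 a1 c δ x := by
  rw [Pstar]
  apply mul_nonneg (by norm_num)
  apply Finset.prod_nonneg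
  intro i _
  split_ifs
  · exact indp_nonneg (x i)
  · exact mul_nonneg (indp_nonneg _) (qd_nonneg hδ0 hδ1 _ _)

lemma Pstar_prob (h01 : a0 ≠ a1) {δ : ℝ} (hδ0 : 0 ≤ δ) (hδ1 : δ ≤ 1) (c : Fin m) :
    IsProbDist (Pstar a0 a1 c δ) :=
  ⟨Pstar_nonneg hδ0 hδ1 c, by rw [tsum_fintype]; exact Pstar_total h01 c δ⟩

lemma edgeFactor_mk (P : (Fin m → X) → ℝ) (x : Fin m → X) (i j : Fin m) :
    edgeFactor P x s(i, j)
      = marg2 P i j (x i, x j) / (marg1 P i (x i) * marg1 P j (x j)) := rfl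

lemma Pstar_markov (h01 : a0 ≠ a1) (c : Fin m) (δ : ℝ) :
    IsMarkovTree (starG c) (Pstar a0 a1 c δ) := by
  intro x
  rw [star_edge_prod (f := fun e => edgeFactor (Pstar a0 a1 c δ) x e)]
  by_cases hsupp : ∀ i, x i = a0 ∨ x i = a1
  · have hind : ∀ i, indp a0 a1 (x i) = 1 := fun i => indp_pos (hsupp i)
    have hedge : ∀ j ∈ Finset.univ.erase c,
        edgeFactor (Pstar a0 a1 c δ) x s(c, j) = 2 * qd δ (x j) (x c) := by
      intro j hj
      rw [edgeFactor_mk, marg2_center h01 c j (Finset.mem_erase.1 hj).1 δ,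
        marg1_Pstar h01 c c δ, marg1_Pstar h01 c j δ]
      simp only [pairDist, hind, qd_symm δ (x c) (x j)]
      rw [show ((2:ℝ)⁻¹ * 1 * 1 * qd δ (x j) (x c)) = 2⁻¹ * qd δ (x j) (x c) by ring,
        show ((2:ℝ)⁻¹ * 1 * (2⁻¹ * 1) : ℝ) = 4⁻¹ by norm_num,
        div_eq_iff (by norm_num : (4:ℝ)⁻¹ ≠ 0)]
      ring
    rw [Finset.prod_congr rfl hedge, Pstar_eq]
    have h1' : ∀ i : Fin m, marg1 (Pstar a0 a1 c δ) i (x i) = 2⁻¹ := fun i => by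
      rw [marg1_Pstar h01 c i δ]; dsimp only; rw [hind i, mul_one]
    have h1 : (∏ i : Fin m, marg1 (Pstar a0 a1 c δ) i (x i)) = (2⁻¹ : ℝ) ^ m := by
      rw [Finset.prod_congr rfl fun i _ => h1' i,
        Finset.prod_const, Finset.card_univ, Fintype.card_fin]
    rw [h1]
    have h2 : (∏ j ∈ Finset.univ.erase c, (2 * qd δ (x j) (x c)))
        = 2 ^ (m - 1) * ∏ j ∈ Finset.univ.erase c, qd δ (x j) (x c) := by
      rw [Finset.prod_mul_distrib, Finset.prod_const,
        Finset.card_erase_of_mem (Finset.mem_univ c), Finset.card_univ, Fintype.card_fin]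
    rw [h2]
    have h3 : ∀ i ∈ Finset.univ.erase c,
        indp a0 a1 (x i) * qd δ (x i) (x c) = qd δ (x i) (x c) := fun i _ => by
      rw [hind i, one_mul]
    rw [Finset.prod_congr rfl h3, hind c, mul_one]
    obtain ⟨k, hk⟩ : ∃ k, m = k + 1 := ⟨m - 1, (Nat.succ_pred_eq_of_pos c.pos).symm⟩
    have hpow : (2⁻¹ : ℝ) ^ m * 2 ^ (m - 1) = 2⁻¹ := by
      subst hk
      rw [Nat.add_sub_cancel, pow_succ, mul_comm ((2:ℝ)⁻¹ ^ k) 2⁻¹, mul_assoc, ← mul_pow]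
      norm_num
    rw [← mul_assoc, hpow]
  · push_neg at hsupp
    obtain ⟨i0, hi0'⟩ := hsupp
    have hi0 : ¬(x i0 = a0 ∨ x i0 = a1) := by tauto
    have hP : Pstar a0 a1 c δ x = 0 := by
      rw [Pstar]
      apply mul_eq_zero_of_right
      apply Finset.prod_eq_zero (Finset.mem_univ i0)
      split_ifs
      · exact indp_neg hi0
      · rw [indp_neg hi0, zero_mul]
    rw [hP]
    symm
    apply mul_eq_zero_of_left
    apply Finset.prod_eq_zero (Finset.mem_univ i0)
    rw [marg1_Pstar h01 c i0 δ]
    dsimp only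
    rw [indp_neg hi0, mul_zero]

/-- binary entropy in bits -/
def Hb (γ : ℝ) : ℝ := -(γ * Real.logb 2 γ + (1 - γ) * Real.logb 2 (1 - γ))

lemma Hb_eq (γ : ℝ) : Hb γ = Real.binEntropy γ / Real.log 2 := by
  rw [Hb, Real.binEntropy, Real.log_inv, Real.log_inv, Real.logb, Real.logb]
  ring

lemma logb_two_inv : Real.logb 2 2⁻¹ = -1 := by
  rw [Real.logb_inv, Real.logb_self_eq_one]
  norm_num

lemma ent_single (h01 : a0 ≠ a1) :
    ent (fun a : X => 2⁻¹ * indp a0 a1 a) = 1 := by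
  rw [ent, tsum_fintype]
  have hpt : ∀ a : X, (2⁻¹ * indp a0 a1 a) * Real.logb 2 (2⁻¹ * indp a0 a1 a)
      = indp a0 a1 a * (2⁻¹ * Real.logb 2 2⁻¹) := by
    intro a
    by_cases ha : a = a0 ∨ a = a1
    · rw [indp_pos ha]; ring_nf
    · rw [indp_neg ha, mul_zero, zero_mul, zero_mul]
  rw [Finset.sum_congr rfl fun a _ => hpt a, sum_indp_mul h01, logb_two_inv]
  norm_num

lemma ent_pair (h01 : a0 ≠ a1) {γ : ℝ} (hγ0 : 0 < γ) (hγ1 : γ < 1) :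
    ent (pairDist a0 a1 γ) = 1 + Hb γ := by
  classical
  rw [ent, tsum_fintype]
  set s : X → X → ℝ := fun a b => (2⁻¹ * qd γ a b) * Real.logb 2 (2⁻¹ * qd γ a b) with hs
  have hpt : ∀ ab : X × X, pairDist a0 a1 γ ab * Real.logb 2 (pairDist a0 a1 γ ab)
      = indp a0 a1 ab.1 * (indp a0 a1 ab.2 * s ab.1 ab.2) := by
    rintro ⟨a, b⟩
    by_cases ha : a = a0 ∨ a = a1
    · by_cases hb : b = a0 ∨ b = a1
      · have : pairDist a0 a1 γ (a, b) = 2⁻¹ * qd γ a b := by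
          rw [pairDist, indp_pos ha, indp_pos hb]; ring
        rw [this, indp_pos ha, indp_pos hb, hs]; ring
      · have : pairDist a0 a1 γ (a, b) = 0 := by
          rw [pairDist, indp_neg hb]; ring
        rw [this, zero_mul, indp_neg hb]; ring
    · have : pairDist a0 a1 γ (a, b) = 0 := by
        rw [pairDist, indp_neg ha]; ring
      rw [this, zero_mul, indp_neg ha]; ring
  rw [Finset.sum_congr rfl fun ab _ => hpt ab, Fintype.sum_prod_type]
  have hrow : ∀ a : X, (∑ b : X, indp a0 a1 a * (indp a0 a1 b * s a b))
      = indp a0 a1 a * (s a a0 + s a a1) := by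
    intro a; rw [← Finset.mul_sum, sum_indp_mul h01]
  rw [Finset.sum_congr rfl fun a _ => hrow a, sum_indp_mul h01]
  have l1 : Real.logb 2 (2⁻¹ * (1 - γ)) = -1 + Real.logb 2 (1 - γ) := by
    rw [Real.logb_mul (by norm_num) (by intro h; linarith), logb_two_inv]
  have l2 : Real.logb 2 (2⁻¹ * γ) = -1 + Real.logb 2 γ := by
    rw [Real.logb_mul (by norm_num) (ne_of_gt hγ0), logb_two_inv]
  have h00 : s a0 a0 = (2⁻¹ * (1 - γ)) * (-1 + Real.logb 2 (1 - γ)) := by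
    simp only [hs, qd_same]; rw [l1]
  have h11 : s a1 a1 = (2⁻¹ * (1 - γ)) * (-1 + Real.logb 2 (1 - γ)) := by
    simp only [hs, qd_same]; rw [l1]
  have h01' : s a0 a1 = (2⁻¹ * γ) * (-1 + Real.logb 2 γ) := by
    simp only [hs, qd_ne h01]; rw [l2]
  have h10 : s a1 a0 = (2⁻¹ * γ) * (-1 + Real.logb 2 γ) := by
    simp only [hs, qd_ne h01.symm]; rw [l2]
  rw [h00, h11, h01', h10, Hb]
  ring

lemma mi_edge (h01 : a0 ≠ a1) {δ : ℝ} (hδ0 : 0 < δ) (hδ1 : δ < 1) (c i j : Fin m)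
    (hij : i ≠ j) (hc : i = c ∨ j = c) :
    mi (Pstar a0 a1 c δ) i j = 1 - Hb δ := by
  have hm2 : marg2 (Pstar a0 a1 c δ) i j = pairDist a0 a1 δ := by
    rcases hc with rfl | rfl
    · exact marg2_center h01 i j (fun h => hij h.symm) δ
    · exact marg2_center' h01 j i hij δ
  rw [mi, marg1_Pstar h01, marg1_Pstar h01, hm2, ent_single h01, ent_pair h01 hδ0 hδ1]
  ring

lemma mi_leaf (h01 : a0 ≠ a1) {δ : ℝ} (hδ0 : 0 < δ) (hδ1 : δ < 1) (c i j : Fin m)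
    (hi : i ≠ c) (hj : j ≠ c) (hij : i ≠ j) :
    mi (Pstar a0 a1 c δ) i j = 1 - Hb (2 * δ * (1 - δ)) := by
  have hγ0 : 0 < 2 * δ * (1 - δ) := by nlinarith
  have hγ1 : 2 * δ * (1 - δ) < 1 := by nlinarith
  rw [mi, marg1_Pstar h01, marg1_Pstar h01, marg2_leaves h01 c i j hi hj hij δ,
    ent_single h01, ent_pair h01 hγ0 hγ1]
  ring

/-- the information threshold of the star model -/
lemma thresh_star (h01 : a0 ≠ a1) {δ : ℝ} (hδ0 : 0 < δ) (hδ1 : δ < 1) (c u v : Fin m)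
    (hu : u ≠ c) (hv : v ≠ c) (huv : u ≠ v) :
    thresh (starG c) (mi (Pstar a0 a1 c δ))
      = 2⁻¹ * (Hb (2 * δ * (1 - δ)) - Hb δ) := by
  have hset : {x : ℝ | ∃ w wb u' ub : Fin m, EVtuple (starG c) w wb u' ub ∧
      x = mi (Pstar a0 a1 c δ) w wb - mi (Pstar a0 a1 c δ) u' ub}
      = {Hb (2 * δ * (1 - δ)) - Hb δ} := by
    ext x
    simp only [Set.mem_setOf_eq, Set.mem_singleton_iff]
    constructor
    · rintro ⟨w, wb, u', ub, ⟨hadj, p, hp, hep, hlen⟩, rfl⟩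
      obtain ⟨huc, hubc, huub, -⟩ := star_long_path p hp hlen
      rw [mi_edge h01 hδ0 hδ1 c w wb hadj.1 hadj.2,
        mi_leaf h01 hδ0 hδ1 c u' ub huc hubc huub]
      ring
    · rintro rfl
      have hadjuc : (starG c).Adj u c := ⟨hu, Or.inr rfl⟩
      have hadjcv : (starG c).Adj c v := ⟨fun h => hv h.symm, Or.inl rfl⟩
      refine ⟨u, c, u, v, ⟨hadjuc, SimpleGraph.Walk.cons hadjuc
        (SimpleGraph.Walk.cons hadjcv SimpleGraph.Walk.nil), ?_, ?_, ?_⟩, ?_⟩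
      · rw [SimpleGraph.Walk.isPath_def]
        simp [List.nodup_cons, hu, huv, hv]
        exact fun h => hv h.symm
      · simp
      · simp
      · rw [mi_edge h01 hδ0 hδ1 c u c hu (Or.inr rfl),
          mi_leaf h01 hδ0 hδ1 c u v hu hv huv]
        ring
  rw [thresh, hset, csInf_singleton]
  norm_num

lemma probn_eq (P : (Fin m → X) → ℝ) (n : ℕ) (E : Set (Fin n → Fin m → X)) :
    probn P n E = ∑ ω : Fin n → Fin m → X, if ω ∈ E then ∏ k, P (ω k) else 0 := by
  classical
  rw [probn, tsum_subtype E (fun ω => ∏ k, P (ω k)), tsum_fintype]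
  exact Finset.sum_congr rfl fun ω _ => by rw [Set.indicator_apply]

lemma probn_nonneg {P : (Fin m → X) → ℝ} (hP : ∀ x, 0 ≤ P x) (n : ℕ)
    (E : Set (Fin n → Fin m → X)) : 0 ≤ probn P n E := by
  rw [probn_eq]
  apply Finset.sum_nonneg
  intro ω _
  split_ifs
  · exact Finset.prod_nonneg fun k _ => hP _
  · exact le_refl 0

lemma sum_prodn (P : (Fin m → X) → ℝ) (hP : ∑ x : Fin m → X, P x = 1) (n : ℕ) :
    ∑ ω : Fin n → Fin m → X, (∏ k, P (ω k)) = 1 := by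
  classical
  rw [← Fintype.piFinset_univ, Finset.sum_prod_piFinset Finset.univ (fun _ x => P x)]
  rw [Finset.prod_congr rfl fun k _ => hP]
  exact Finset.prod_const_one

lemma probn_add_compl {P : (Fin m → X) → ℝ} (hP : ∑ x : Fin m → X, P x = 1) (n : ℕ)
    (E : Set (Fin n → Fin m → X)) : probn P n E + probn P n Eᶜ = 1 := by
  classical
  rw [probn_eq, probn_eq, ← Finset.sum_add_distrib]
  rw [← sum_prodn P hP n]
  refine Finset.sum_congr rfl fun ω _ => ?_
  by_cases hω : ω ∈ E
  · rw [if_pos hω, if_neg (by simp [hω]), add_zero]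
  · rw [if_neg hω, if_pos (by simp [hω]), zero_add]

lemma probn_mono {P : (Fin m → X) → ℝ} (hP : ∀ x, 0 ≤ P x) (n : ℕ)
    {E E' : Set (Fin n → Fin m → X)} (h : E ⊆ E') : probn P n E ≤ probn P n E' := by
  classical
  rw [probn_eq, probn_eq]
  refine Finset.sum_le_sum fun ω _ => ?_
  by_cases hω : ω ∈ E
  · rw [if_pos hω, if_pos (h hω)]
  · rw [if_neg hω]
    split_ifs
    · exact Finset.prod_nonneg fun k _ => hP _
    · exact le_refl 0

lemma probn_le_one {P : (Fin m → X) → ℝ} (hP0 : ∀ x, 0 ≤ P x)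
    (hP1 : ∑ x : Fin m → X, P x = 1) (n : ℕ) (E : Set (Fin n → Fin m → X)) :
    probn P n E ≤ 1 := by
  have h := probn_add_compl hP1 n E
  have h2 := probn_nonneg hP0 n Eᶜ
  linarith

lemma Pstar_continuous (c : Fin m) (x : Fin m → X) :
    Continuous fun δ : ℝ => Pstar a0 a1 c δ x := by
  unfold Pstar
  apply continuous_const.mul
  apply continuous_finset_prod
  intro i _
  by_cases hic : i = c
  · simp only [if_pos hic]; exact continuous_const
  · simp only [if_neg hic]
    apply continuous_const.mul
    unfold qd
    by_cases h : x i = x c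
    · simp only [if_pos h]; exact continuous_const.sub continuous_id
    · simp only [if_neg h]; exact continuous_id

lemma probn_continuous (c : Fin m) (n : ℕ) (E : Set (Fin n → Fin m → X)) :
    Continuous fun δ : ℝ => probn (Pstar a0 a1 c δ) n E := by
  classical
  have : (fun δ : ℝ => probn (Pstar a0 a1 c δ) n E)
      = fun δ => ∑ ω : Fin n → Fin m → X,
          if ω ∈ E then ∏ k, Pstar a0 a1 c δ (ω k) else 0 :=
    funext fun δ => probn_eq _ n E
  rw [this]
  apply continuous_finset_sum
  intro ω _
  by_cases hω : ω ∈ E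
  · simp only [if_pos hω]
    exact continuous_finset_prod _ fun k _ => Pstar_continuous c (ω k)
  · simp only [if_neg hω]; exact continuous_const

lemma Pstar_half (c c' : Fin m) : Pstar a0 a1 c 2⁻¹ = Pstar a0 a1 c' 2⁻¹ := by
  have key : ∀ c'' : Fin m, Pstar a0 a1 c'' 2⁻¹
      = fun x => 2⁻¹ * ((∏ i, indp a0 a1 (x i)) * 2⁻¹ ^ (m - 1)) := by
    intro c''
    funext x
    rw [Pstar]
    congr 1
    have hq : ∀ y z : X, qd (2⁻¹ : ℝ) y z = 2⁻¹ := by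
      intro y z; unfold qd; split_ifs <;> norm_num
    have hpt : ∀ i : Fin m, (if i = c'' then indp a0 a1 (x i)
        else indp a0 a1 (x i) * qd 2⁻¹ (x i) (x c''))
        = indp a0 a1 (x i) * (if i = c'' then 1 else 2⁻¹) := by
      intro i
      by_cases h : i = c''
      · rw [if_pos h, if_pos h, mul_one]
      · rw [if_neg h, if_neg h, hq]
    rw [Finset.prod_congr rfl fun i _ => hpt i, Finset.prod_mul_distrib]
    congr 1
    rw [← Finset.mul_prod_erase _ _ (Finset.mem_univ c''), if_pos rfl, one_mul,
      Finset.prod_congr rfl (fun i hi => if_neg (Finset.mem_erase.1 hi).1),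
      Finset.prod_const, Finset.card_erase_of_mem (Finset.mem_univ c''),
      Finset.card_univ, Fintype.card_fin]
  rw [key c, key c']

lemma Hb_continuous : Continuous Hb := by
  have : Hb = fun γ => Real.binEntropy γ / Real.log 2 := funext Hb_eq
  rw [this]
  exact Real.binEntropy_continuous.div_const _

lemma gap_continuous : Continuous fun δ : ℝ => Hb (2 * δ * (1 - δ)) - Hb δ := by
  apply Continuous.sub _ Hb_continuous
  apply Hb_continuous.comp
  continuity

lemma gap_half : Hb (2 * (2⁻¹ : ℝ) * (1 - 2⁻¹)) - Hb 2⁻¹ = 0 := by norm_num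

lemma gap_pos {δ : ℝ} (h0 : 0 < δ) (h1 : δ < 2⁻¹) :
    0 < Hb (2 * δ * (1 - δ)) - Hb δ := by
  rw [Hb_eq, Hb_eq, div_sub_div_same]
  apply div_pos _ (Real.log_pos one_lt_two)
  rw [sub_pos]
  apply Real.binEntropy_strictMonoOn
  · exact ⟨le_of_lt h0, le_of_lt h1⟩
  · constructor
    · nlinarith
    · nlinarith
  · nlinarith

end Dist

/-- **Theorem 3: minimax converse as the information threshold vanishes.**
For `p` odd, `p > 1`, a finite alphabet with at least two symbols, any finite
sample size `n` and any tree estimator `Φ`, the limit as `η ↓ 0` of the worst-case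
probability of incorrect structure recovery over the class `C_η^𝒯` exists and is
at least `1/2`.  (Taking the infimum over all estimators `Φ` then preserves the
bound `≥ 1/2`.) -/
theorem minimax_converse (p : ℕ) (hodd : Odd p) (hp : 1 < p)
    (X : Type*) [Fintype X] (hX : 2 ≤ Fintype.card X)
    (n : ℕ) (Φ : (Fin n → Fin p → X) → {G : SimpleGraph (Fin p) // G.IsTree}) :
    ∃ L : ℝ,
      Filter.Tendsto (errSup p X n Φ) (nhdsWithin 0 (Set.Ioi 0)) (nhds L) ∧
      1 / 2 ≤ L := by
  classical
  -- basic facts about p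
  have hp3 : 3 ≤ p := by
    obtain ⟨k, hk⟩ := hodd
    omega
  obtain ⟨a0, a1, h01⟩ := Fintype.exists_pair_of_one_lt_card (by omega : 1 < Fintype.card X)
  set v0 : Fin p := ⟨0, by omega⟩ with hv0
  set v1 : Fin p := ⟨1, by omega⟩ with hv1
  set v2 : Fin p := ⟨2, by omega⟩ with hv2
  have h02 : v0 ≠ v2 := by simp [hv0, hv2, Fin.ext_iff]
  have h12 : v1 ≠ v2 := by simp [hv1, hv2, Fin.ext_iff]
  have h010 : v0 ≠ v1 := by simp [hv0, hv1, Fin.ext_iff]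
  have hTT : starG v0 ≠ starG v1 := by
    intro h
    have h2 : (starG v1).Adj v1 v2 := ⟨h12, Or.inl rfl⟩
    rw [← h] at h2
    rcases h2.2 with hc | hc
    · exact h010 hc.symm
    · exact h02 hc.symm
  set E : Set (Fin n → Fin p → X) := {ω | (Φ ω).1 ≠ starG v0} with hE
  set E2 : Set (Fin n → Fin p → X) := {ω | (Φ ω).1 ≠ starG v1} with hE2
  have hEc : Eᶜ ⊆ E2 := by
    intro ω hω
    simp only [hE, Set.mem_compl_iff, Set.mem_setOf_eq, not_not] at hω
    simp only [hE2, Set.mem_setOf_eq, hω]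
    exact hTT
  set S : ℝ → Set ℝ := fun η => {x : ℝ | ∃ M ∈ modelClass p X η,
    x = probn M.dist n {ω | (Φ ω).1 ≠ M.tree}} with hS
  have herrS : ∀ η, errSup p X n Φ η = sSup (S η) := fun η => rfl
  have hbdd : ∀ η, BddAbove (S η) := by
    intro η
    refine ⟨1, ?_⟩
    rintro x ⟨M, hM, rfl⟩
    exact probn_le_one M.prob.1 (by have h := M.prob.2; rw [tsum_fintype] at h; exact h) n _
  -- the two star models for a given δ
  have hmodel : ∀ c : Fin p, ∀ u v : Fin p, u ≠ c → v ≠ c → u ≠ v →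
      ∀ δ : ℝ, 0 < δ → δ < 2⁻¹ → ∀ η : ℝ, Hb (2 * δ * (1 - δ)) - Hb δ ≤ 2 * η →
      probn (Pstar a0 a1 c δ) n {ω | (Φ ω).1 ≠ starG c} ∈ S η := by
    intro c u v hu hv huv δ hδ0 hδ1 η hη
    refine ⟨⟨starG c, star_isTree, Pstar a0 a1 c δ,
      Pstar_prob h01 (le_of_lt hδ0) (by linarith) c, Pstar_markov h01 c δ⟩, ?_, rfl⟩
    constructor
    · rw [thresh_star h01 hδ0 (by linarith) c u v hu hv huv]
      have := gap_pos hδ0 hδ1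
      linarith
    · rw [thresh_star h01 hδ0 (by linarith) c u v hu hv huv]
      linarith
  -- key lower bound for every positive η
  have KEY : ∀ η : ℝ, 0 < η → (S η).Nonempty ∧ 1 / 2 ≤ errSup p X n Φ η := by
    intro η hη
    have hchoice : ∀ ε : ℝ, 0 < ε → ∃ δ : ℝ, 0 < δ ∧ δ < 2⁻¹ ∧
        Hb (2 * δ * (1 - δ)) - Hb δ ≤ 2 * η ∧
        1 - ε < probn (Pstar a0 a1 v0 δ) n E + probn (Pstar a0 a1 v1 δ) n Eᶜ := by
      intro ε hε
      set G : ℝ → ℝ := fun δ =>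
        probn (Pstar a0 a1 v0 δ) n E + probn (Pstar a0 a1 v1 δ) n Eᶜ with hG
      have hGc : Continuous G := (probn_continuous v0 n E).add (probn_continuous v1 n Eᶜ)
      have hG1 : G 2⁻¹ = 1 := by
        rw [hG]
        dsimp only
        rw [Pstar_half v1 v0]
        exact probn_add_compl (Pstar_total h01 v0 2⁻¹) n E
      have l1 : ∀ᶠ δ in nhdsWithin 2⁻¹ (Set.Iio 2⁻¹), δ ∈ Set.Ioo (0:ℝ) 2⁻¹ :=
        Ioo_mem_nhdsLT (by norm_num)
      have l2 : ∀ᶠ δ in nhdsWithin 2⁻¹ (Set.Iio 2⁻¹), 1 - ε < G δ := by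
        have ht : Filter.Tendsto G (nhdsWithin 2⁻¹ (Set.Iio 2⁻¹)) (nhds 1) := by
          rw [← hG1]
          exact (hGc.tendsto 2⁻¹).mono_left nhdsWithin_le_nhds
        exact ht.eventually (eventually_gt_nhds (by linarith))
      have l3 : ∀ᶠ δ in nhdsWithin 2⁻¹ (Set.Iio 2⁻¹),
          Hb (2 * δ * (1 - δ)) - Hb δ < 2 * η := by
        have ht : Filter.Tendsto (fun δ : ℝ => Hb (2 * δ * (1 - δ)) - Hb δ)
            (nhdsWithin 2⁻¹ (Set.Iio 2⁻¹)) (nhds 0) := by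
          rw [← gap_half]
          exact (gap_continuous.tendsto 2⁻¹).mono_left nhdsWithin_le_nhds
        exact ht.eventually (eventually_lt_nhds (by linarith))
      obtain ⟨δ, hδIoo, hδG, hδgap⟩ := (l1.and (l2.and l3)).exists
      exact ⟨δ, hδIoo.1, hδIoo.2, le_of_lt hδgap, hδG⟩
    have main : ∀ ε : ℝ, 0 < ε → 1 - ε ≤ 2 * errSup p X n Φ η := by
      intro ε hε
      obtain ⟨δ, hδ0, hδ1, hgap, hGδ⟩ := hchoice ε hε
      have m1 : probn (Pstar a0 a1 v0 δ) n E ∈ S η := by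
        have := hmodel v0 v1 v2 h010.symm h02.symm h12 δ hδ0 hδ1 η hgap
        exact this
      have m2 : probn (Pstar a0 a1 v1 δ) n E2 ∈ S η :=
        hmodel v1 v0 v2 h010 h12.symm h02 δ hδ0 hδ1 η hgap
      have e1 : probn (Pstar a0 a1 v0 δ) n E ≤ errSup p X n Φ η :=
        le_csSup (hbdd η) m1
      have e2 : probn (Pstar a0 a1 v1 δ) n E2 ≤ errSup p X n Φ η :=
        le_csSup (hbdd η) m2
      have e3 : probn (Pstar a0 a1 v1 δ) n Eᶜ ≤ probn (Pstar a0 a1 v1 δ) n E2 :=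
        probn_mono (Pstar_nonneg (le_of_lt hδ0) (by linarith) v1) n hEc
      linarith
    have hne : (S η).Nonempty := by
      obtain ⟨δ, hδ0, hδ1, hgap, -⟩ := hchoice 1 one_pos
      exact ⟨_, hmodel v0 v1 v2 h010.symm h02.symm h12 δ hδ0 hδ1 η hgap⟩
    refine ⟨hne, ?_⟩
    by_contra hcon
    push_neg at hcon
    have := main (1 / 2 - errSup p X n Φ η) (by linarith)
    linarith
  -- monotonicity of errSup on positive η
  have hmono : MonotoneOn (errSup p X n Φ) (Set.Ioi 0) := by
    intro η hη η' hη' hle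
    rw [herrS, herrS]
    apply csSup_le_csSup (hbdd η') ((KEY η hη).1)
    rintro x ⟨M, hM, rfl⟩
    exact ⟨M, ⟨hM.1, hM.2.trans hle⟩, rfl⟩
  have hbddB : BddBelow (errSup p X n Φ '' Set.Ioi 0) := by
    refine ⟨1 / 2, ?_⟩
    rintro x ⟨η, hη, rfl⟩
    exact (KEY η hη).2
  refine ⟨sInf (errSup p X n Φ '' Set.Ioi 0),
    MonotoneOn.tendsto_nhdsGT hmono hbddB, ?_⟩
  refine le_csInf ⟨errSup p X n Φ 1, ⟨1, by norm_num, rfl⟩⟩ ?_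
  rintro x ⟨η, hη, rfl⟩
  exact (KEY η hη).2

end TreePaper
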